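/- Let c ∈ ℝ \ {0}. For every integer l ≥ 0, writing n = 4l+3, one has Σ_{s=0}^{l} ( c_{2s} c_{n+1−2s} − c_{2s+1} c_{n−2s} ) = (d₁ d₂/(a+b)) · (b^{2l+3} − a^{2l+3}) · (b^{2l+2} − a^{2l+2}). -/

import Mathlib

/-- The coefficient sequence of the Degasperis–Procesi conserved quantities:
`c₀ = −1/(3c)`, `c₁ = −2/(9ct)`, `c_{m+2} = −t⁻² c_m + 3 t⁻¹ c_{m+1}`,
where `t` is the real cube root of `c`. -/
noncomputable def cseq (c t : ℝ) : ℕ → ℝ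
  | 0 => -1 / (3 * c)
  | 1 => -2 / (9 * c * t)
  | n + 2 => -(t ^ 2)⁻¹ * cseq c t n + 3 * t⁻¹ * cseq c t (n + 1)

noncomputable def aDP (t : ℝ) : ℝ := (3 + Real.sqrt 5) / (2 * t)
noncomputable def bDP (t : ℝ) : ℝ := (3 - Real.sqrt 5) / (2 * t)
noncomputable def d1DP (c : ℝ) : ℝ := -(3 + Real.sqrt 5) / (18 * c)
noncomputable def d2DP (c : ℝ) : ℝ := (-3 + Real.sqrt 5) / (18 * c)

lemma geo (a b : ℝ) (l : ℕ) :
    (a^2 - b^2) * ∑ s ∈ Finset.range (l+1), a^(4*l+3-2*s) * b^(2*s)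
      = a^(4*l+5) - a^(2*l+3) * b^(2*l+2) := by
  induction l with
  | zero => simp [Finset.sum_range_one]; ring
  | succ l ih =>
      rw [Finset.sum_range_succ]
      have hrw : ∑ s ∈ Finset.range (l+1), a^(4*(l+1)+3-2*s) * b^(2*s)
          = a^4 * ∑ s ∈ Finset.range (l+1), a^(4*l+3-2*s) * b^(2*s) := by
        rw [Finset.mul_sum]
        refine Finset.sum_congr rfl (fun s hs => ?_)
        have hs' : s ≤ l := by simpa [Nat.lt_succ_iff] using hs
        have h1 : 4*(l+1)+3-2*s = 4 + (4*l+3-2*s) := by omega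
        rw [h1, pow_add]; ring
      rw [hrw]
      have h2 : 4*(l+1)+3-2*(l+1) = 2*l+5 := by omega
      rw [h2]
      have h3 : 4*(l+1)+5 = 4*l+9 := by omega
      have h4 : 2*(l+1)+3 = 2*l+5 := by omega
      have h5 : 2*(l+1)+2 = 2*l+4 := by omega
      rw [h3, h4, h5]
      linear_combination a^4 * ih

lemma closed (c t : ℝ) (hc : c ≠ 0) (ht : t ^ 3 = c) (m : ℕ) :
    cseq c t m = d2DP c * aDP t ^ m + d1DP c * bDP t ^ m := by
  have htne : t ≠ 0 := by rintro rfl; simp at ht; exact hc ht.symm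
  have he : Real.sqrt 5 ^ 2 = 5 := Real.sq_sqrt (by norm_num)
  have ha2 : aDP t ^ 2 = -(t^2)⁻¹ + 3 * t⁻¹ * aDP t := by
    unfold aDP; field_simp; linear_combination he
  have hb2 : bDP t ^ 2 = -(t^2)⁻¹ + 3 * t⁻¹ * bDP t := by
    unfold bDP; field_simp; linear_combination he
  induction m using Nat.twoStepInduction with
  | zero =>
      show -1 / (3 * c) = _
      unfold d1DP d2DP; simp; field_simp; ring
  | one =>
      show -2 / (9 * c * t) = _
      unfold d1DP d2DP aDP bDP
      field_simp
      linear_combination (-18) * he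
  | more m ih1 ih2 =>
      show -(t ^ 2)⁻¹ * cseq c t m + 3 * t⁻¹ * cseq c t (m+1) = _
      rw [ih1, ih2]
      linear_combination (-(d2DP c * aDP t ^ m)) * ha2 - (d1DP c * bDP t ^ m) * hb2

/-- For every `l ≥ 0`, with `n = 4l+3`,
`Σ_{s=0}^{l} (c_{2s} c_{n+1−2s} − c_{2s+1} c_{n−2s})
  = (d₁d₂/(a+b)) (b^{2l+3} − a^{2l+3}) (b^{2l+2} − a^{2l+2})`. -/
theorem stmt14 (c t : ℝ) (hc : c ≠ 0) (ht : t ^ 3 = c) (l : ℕ) :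
    ∑ s ∈ Finset.range (l + 1),
        (cseq c t (2 * s) * cseq c t (4 * l + 4 - 2 * s) -
          cseq c t (2 * s + 1) * cseq c t (4 * l + 3 - 2 * s)) =
      (d1DP c * d2DP c / (aDP t + bDP t)) *
        (bDP t ^ (2 * l + 3) - aDP t ^ (2 * l + 3)) *
        (bDP t ^ (2 * l + 2) - aDP t ^ (2 * l + 2)) := by
  have htne : t ≠ 0 := by rintro rfl; simp at ht; exact hc ht.symm
  have he : Real.sqrt 5 ^ 2 = 5 := Real.sq_sqrt (by norm_num)
  set a := aDP t
  set b := bDP t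
  set d1 := d1DP c
  set d2 := d2DP c
  have hterm : ∀ s ∈ Finset.range (l+1),
      cseq c t (2 * s) * cseq c t (4 * l + 4 - 2 * s) -
        cseq c t (2 * s + 1) * cseq c t (4 * l + 3 - 2 * s)
      = d1 * d2 * (a - b) * (b^(2*s) * a^(4*l+3-2*s) - a^(2*s) * b^(4*l+3-2*s)) := by
    intro s hs
    have hs' : s ≤ l := by simpa [Nat.lt_succ_iff] using hs
    have h1 : 4*l+4-2*s = (4*l+3-2*s) + 1 := by omega
    rw [closed c t hc ht, closed c t hc ht, closed c t hc ht, closed c t hc ht, h1]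
    set k := 4*l+3-2*s
    ring
  rw [Finset.sum_congr rfl hterm, ← Finset.mul_sum, Finset.sum_sub_distrib]
  have g1 : (a^2 - b^2) * ∑ s ∈ Finset.range (l+1), a^(4*l+3-2*s) * b^(2*s)
      = a^(4*l+5) - a^(2*l+3) * b^(2*l+2) := geo a b l
  have g2 : (b^2 - a^2) * ∑ s ∈ Finset.range (l+1), b^(4*l+3-2*s) * a^(2*s)
      = b^(4*l+5) - b^(2*l+3) * a^(2*l+2) := geo b a l
  have hsum : a + b = 3 / t := by
    show aDP t + bDP t = _; unfold aDP bDP; field_simp; ring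
  have hdiff : a - b = Real.sqrt 5 / t := by
    show aDP t - bDP t = _; unfold aDP bDP; field_simp; ring
  have habne : a + b ≠ 0 := by
    rw [hsum]; positivity
  have hdne : a - b ≠ 0 := by
    rw [hdiff]
    have : Real.sqrt 5 > 0 := Real.sqrt_pos.mpr (by norm_num)
    exact div_ne_zero (ne_of_gt this) htne
  have hcomm1 : ∑ s ∈ Finset.range (l+1), b^(2*s) * a^(4*l+3-2*s)
      = ∑ s ∈ Finset.range (l+1), a^(4*l+3-2*s) * b^(2*s) :=
    Finset.sum_congr rfl (fun s _ => mul_comm _ _)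
  have hcomm2 : ∑ s ∈ Finset.range (l+1), a^(2*s) * b^(4*l+3-2*s)
      = ∑ s ∈ Finset.range (l+1), b^(4*l+3-2*s) * a^(2*s) :=
    Finset.sum_congr rfl (fun s _ => mul_comm _ _)
  rw [hcomm1, hcomm2]
  rw [div_mul_eq_mul_div, div_mul_eq_mul_div, eq_div_iff habne]
  linear_combination d1 * d2 * g1 + d1 * d2 * g2
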